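/- arXiv:1906.00788 — 3 statements merged into one kernel-verified Lean document; each statement's English description precedes it below -/
import Mathlib

section
/- For all integers n, t^{-n} v_{3n} = t^{-n} v_n^3 - 3 v_n v_{-n} + 3. -/
open Polynomial in
lemma cubic_roots (r s t : ℂ) :
    ∃ a b c : ℂ, a + b + c = r ∧ a*b + a*c + b*c = -s ∧ a*b*c = t := by
  obtain ⟨a, ha⟩ : ∃ a : ℂ, (X^3 - (C r * X^2 + C s * X + C t)).IsRoot a := by
    apply Complex.exists_root
    have : (X^3 - (C r * X^2 + C s * X + C t) : ℂ[X]).degree = 3 := by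
      compute_degree!
    rw [this]; norm_num
  have ha' : a^3 = r * a^2 + s * a + t := by
    have := ha
    simp only [IsRoot, eval_sub, eval_add, eval_mul, eval_pow, eval_C, eval_X] at this
    linear_combination this
  obtain ⟨d, hd⟩ := IsAlgClosed.exists_pow_nat_eq ((a - r)^2 - 4*(a^2 - a*r - s)) (n := 2) (by norm_num)
  refine ⟨a, (r - a + d)/2, (r - a - d)/2, by ring, ?_, ?_⟩
  · linear_combination (-1/4 : ℂ) * hd
  · linear_combination (-a/4) * hd + ha'

theorem stmt_12 (r s t : ℂ) (ht : t ≠ 0)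
    (v : ℤ → ℂ)
    (hv : ∀ n : ℤ, v n = r * v (n-1) + s * v (n-2) + t * v (n-3))
    (hv0 : v 0 = 3) (hv1 : v 1 = r) (hv2 : v 2 = r ^ 2 + 2 * s) :
    ∀ n : ℤ, t ^ (-n) * v (3 * n) = t ^ (-n) * v n ^ 3 - 3 * v n * v (-n) + 3 := by
  obtain ⟨a, b, c, h1, h2, h3⟩ := cubic_roots r s t
  have habc : a * b * c ≠ 0 := h3 ▸ ht
  have ha0 : a ≠ 0 := fun h => habc (by simp [h])
  have hb0 : b ≠ 0 := fun h => habc (by simp [h])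
  have hc0 : c ≠ 0 := fun h => habc (by simp [h])
  -- each root satisfies the cubic
  have hca : a^3 = r * a^2 + s * a + t := by linear_combination a^2 * h1 - a * h2 + h3
  have hcb : b^3 = r * b^2 + s * b + t := by linear_combination b^2 * h1 - b * h2 + h3
  have hcc : c^3 = r * c^2 + s * c + t := by linear_combination c^2 * h1 - c * h2 + h3
  -- zpow recurrence for a nonzero root
  have hrec : ∀ x : ℂ, x ≠ 0 → x^3 = r * x^2 + s * x + t →
      ∀ m : ℤ, x ^ m = r * x ^ (m-1) + s * x ^ (m-2) + t * x ^ (m-3) := by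
    intro x hx hx3 m
    have e0 : x ^ m = x ^ (m - 3) * x ^ (3:ℕ) := by
      rw [← zpow_natCast x 3, ← zpow_add₀ hx]; norm_num
    have e1 : x ^ (m-1) = x ^ (m - 3) * x ^ (2:ℕ) := by
      rw [← zpow_natCast x 2, ← zpow_add₀ hx]; ring_nf
    have e2 : x ^ (m-2) = x ^ (m - 3) * x ^ (1:ℕ) := by
      rw [← zpow_natCast x 1, ← zpow_add₀ hx]; ring_nf
    rw [e0, e1, e2]
    push_cast
    rw [hx3]; ring
  have hra := hrec a ha0 hca
  have hrb := hrec b hb0 hcb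
  have hrc := hrec c hc0 hcc
  -- the closed form
  set w : ℤ → ℂ := fun n => a ^ n + b ^ n + c ^ n with hw
  have hwrec : ∀ m : ℤ, w m = r * w (m-1) + s * w (m-2) + t * w (m-3) := by
    intro m
    simp only [hw]
    rw [hra m, hrb m, hrc m]; ring
  have key : ∀ n : ℤ, v n = w n ∧ v (n+1) = w (n+1) ∧ v (n+2) = w (n+2) := by
    have base : v 0 = w 0 ∧ v 1 = w 1 ∧ v 2 = w 2 := by
      refine ⟨?_, ?_, ?_⟩
      · simp [hw, hv0]; norm_num
      · simp only [hw, hv1, zpow_one]; rw [h1]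
      · simp only [hw, hv2]
        have e : ∀ x : ℂ, x ^ (2:ℤ) = x ^ (2:ℕ) := fun x => by norm_cast
        rw [e, e, e]
        linear_combination (-(a+b+c)-r) * h1 + 2 * h2
    intro n
    induction n using Int.induction_on with
    | zero => simpa using base
    | succ i ih =>
      obtain ⟨e0, e1, e2⟩ := ih
      refine ⟨by simpa using e1, by push_cast; ring_nf; push_cast at e2 ⊢; convert e2 using 2 <;> ring, ?_⟩
      have hv3 := hv ((i:ℤ) + 3)
      have hw3 := hwrec ((i:ℤ) + 3)
      have r1 : (i:ℤ) + 3 - 1 = i + 2 := by ring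
      have r2 : (i:ℤ) + 3 - 2 = i + 1 := by ring
      have r3 : (i:ℤ) + 3 - 3 = i := by ring
      rw [r1, r2, r3] at hv3 hw3
      have : v ((i:ℤ) + 3) = w ((i:ℤ) + 3) := by rw [hv3, hw3, e0, e1, e2]
      convert this using 2 <;> push_cast <;> ring
    | pred i ih =>
      obtain ⟨e0, e1, e2⟩ := ih
      have hv3 := hv (-(i:ℤ) + 2)
      have hw3 := hwrec (-(i:ℤ) + 2)
      have r1 : -(i:ℤ) + 2 - 1 = -i + 1 := by ring
      have r2 : -(i:ℤ) + 2 - 2 = -i := by ring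
      have r3 : -(i:ℤ) + 2 - 3 = -i - 1 := by ring
      rw [r1, r2, r3] at hv3 hw3
      have hnew : v (-(i:ℤ) - 1) = w (-(i:ℤ) - 1) := by
        have : t * v (-(i:ℤ) - 1) = t * w (-(i:ℤ) - 1) := by
          have := hv3
          rw [e0, e1] at this
          linear_combination e2 - this + hw3
        exact mul_left_cancel₀ ht this
      refine ⟨by convert hnew using 2 <;> ring, by convert e0 using 2 <;> ring,
        by convert e1 using 2 <;> ring⟩
  have keyn : ∀ n : ℤ, v n = w n := fun n => (key n).1
  intro n
  rw [keyn, keyn, keyn, ← h3]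
  simp only [hw]
  have za : a ^ (3 * n) = (a ^ n) ^ (3:ℕ) := by
    rw [mul_comm, zpow_mul]; norm_cast
  have zb : b ^ (3 * n) = (b ^ n) ^ (3:ℕ) := by
    rw [mul_comm, zpow_mul]; norm_cast
  have zc : c ^ (3 * n) = (c ^ n) ^ (3:ℕ) := by
    rw [mul_comm, zpow_mul]; norm_cast
  rw [za, zb, zc, zpow_neg, zpow_neg, zpow_neg, zpow_neg, mul_zpow, mul_zpow]
  have pa : a ^ n ≠ 0 := zpow_ne_zero _ ha0
  have pb : b ^ n ≠ 0 := zpow_ne_zero _ hb0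
  have pc : c ^ n ≠ 0 := zpow_ne_zero _ hc0
  field_simp
  ring
end

section
/- For all integers n and m, 2 w_{n+m} = 2 v_m w_n - (v_m^2 - v_{2m}) w_{n-m} + 2 t^m w_{n-2m}. -/
open Matrix

/-- Uniqueness of solutions to the third order recurrence (t ≠ 0). -/
lemma aux_uniq14 (r s t : ℂ) (ht : t ≠ 0) (f g : ℤ → ℂ)
    (hf : ∀ n : ℤ, f n = r * f (n-1) + s * f (n-2) + t * f (n-3))
    (hg : ∀ n : ℤ, g n = r * g (n-1) + s * g (n-2) + t * g (n-3))
    (h0 : f 0 = g 0) (h1 : f 1 = g 1) (h2 : f 2 = g 2) : ∀ n : ℤ, f n = g n := by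
  have key : ∀ n : ℤ, f n = g n ∧ f (n+1) = g (n+1) ∧ f (n+2) = g (n+2) := by
    intro n
    induction n using Int.induction_on with
    | zero =>
      refine ⟨h0, ?_, ?_⟩
      · rw [show (0:ℤ)+1 = 1 by norm_num]; exact h1
      · rw [show (0:ℤ)+2 = 2 by norm_num]; exact h2
    | succ k ih =>
      obtain ⟨e0, e1, e2⟩ := ih
      refine ⟨e1, ?_, ?_⟩
      · rw [show (k:ℤ)+1+1 = (k:ℤ)+2 by ring]; exact e2
      · have hfk := hf ((k:ℤ)+1+2)
        have hgk := hg ((k:ℤ)+1+2)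
        have a1 : (k:ℤ)+1+2-1 = (k:ℤ)+2 := by ring
        have a2 : (k:ℤ)+1+2-2 = (k:ℤ)+1 := by ring
        have a3 : (k:ℤ)+1+2-3 = (k:ℤ) := by ring
        rw [a1, a2, a3] at hfk hgk
        rw [hfk, hgk, e0, e1, e2]
    | pred k ih =>
      obtain ⟨e0, e1, e2⟩ := ih
      refine ⟨?_, ?_, ?_⟩
      · have hfk := hf (-(k:ℤ)+2)
        have hgk := hg (-(k:ℤ)+2)
        have a1 : -(k:ℤ)+2-1 = -(k:ℤ)+1 := by ring
        have a2 : -(k:ℤ)+2-2 = -(k:ℤ) := by ring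
        have a3 : -(k:ℤ)+2-3 = -(k:ℤ)-1 := by ring
        rw [a1, a2, a3] at hfk hgk
        have hcan : t * f (-(k:ℤ)-1) = t * g (-(k:ℤ)-1) := by
          rw [e0, e1, e2] at hfk
          rw [hgk] at hfk
          linear_combination -hfk
        exact mul_left_cancel₀ ht hcan
      · rw [show -(k:ℤ)-1+1 = -(k:ℤ) by ring]; exact e0
      · rw [show -(k:ℤ)-1+2 = -(k:ℤ)+1 by ring]; exact e1
  intro n
  exact (key n).1

/-- Cayley-Hamilton for 3×3 matrices, in the doubled form. -/
lemma aux_ch14 (A : Matrix (Fin 3) (Fin 3) ℂ) :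
    (2:ℂ) • (A*A*A) = (2 * A.trace) • (A*A) - (A.trace^2 - (A*A).trace) • A
      + (2 * A.det) • (1 : Matrix (Fin 3) (Fin 3) ℂ) := by
  ext i j
  fin_cases i <;> fin_cases j <;>
    simp [Matrix.mul_apply, Fin.sum_univ_three, Matrix.trace_fin_three,
      Matrix.det_fin_three, Matrix.one_apply] <;> ring

set_option maxHeartbeats 1000000 in
theorem stmt_14 (r s t a b c : ℂ) (ht : t ≠ 0)
    (w v : ℤ → ℂ)
    (hw : ∀ n : ℤ, w n = r * w (n-1) + s * w (n-2) + t * w (n-3))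
    (hw0 : w 0 = a) (hw1 : w 1 = b) (hw2 : w 2 = c)
    (hv : ∀ n : ℤ, v n = r * v (n-1) + s * v (n-2) + t * v (n-3))
    (hv0 : v 0 = 3) (hv1 : v 1 = r) (hv2 : v 2 = r ^ 2 + 2 * s) :
    ∀ n m : ℤ, 2 * w (n + m) =
      2 * v m * w n - (v m ^ 2 - v (2 * m)) * w (n - m) + 2 * t ^ m * w (n - 2 * m) := by
  set M : Matrix (Fin 3) (Fin 3) ℂ := !![r,s,t;1,0,0;0,1,0] with hM
  have hdetM : M.det = t := by
    simp [hM, Matrix.det_fin_three, Matrix.vecHead, Matrix.vecTail]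
  have hMunit : IsUnit M := by
    rw [Matrix.isUnit_iff_isUnit_det, hdetM]; exact ht.isUnit
  obtain ⟨u, hu⟩ := hMunit
  set P : ℤ → Matrix (Fin 3) (Fin 3) ℂ := fun k => ↑(u ^ k) with hP
  have Pmul : ∀ i j : ℤ, P (i + j) = P i * P j := by
    intro i j
    simp only [hP]
    rw [_root_.zpow_add, Units.val_mul]
  have hP0 : P 0 = 1 := by simp [hP]
  have hP1 : P 1 = M := by simp [hP, hu]
  have hM3 : M * M * M = r • (M*M) + s • M + t • (1 : Matrix (Fin 3) (Fin 3) ℂ) := by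
    ext i j
    fin_cases i <;> fin_cases j <;>
      simp [hM, Matrix.mul_apply, Fin.sum_univ_three, Matrix.one_apply,
        Matrix.vecHead, Matrix.vecTail] <;> ring
  have Prec : ∀ k : ℤ, P k = r • P (k-1) + s • P (k-2) + t • P (k-3) := by
    intro k
    have e0 : P k = P (k-3) * (M*M*M) := by
      rw [show M*M*M = P 1 * P 1 * P 1 by rw [hP1], ← Pmul, ← Pmul, ← Pmul]
      congr 1; ring
    have e1 : P (k-1) = P (k-3) * (M*M) := by
      rw [show M*M = P 1 * P 1 by rw [hP1], ← Pmul, ← Pmul]; congr 1; ring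
    have e2 : P (k-2) = P (k-3) * M := by
      rw [← hP1, ← Pmul]; congr 1; ring
    rw [e0, hM3, e1, e2]
    simp [Matrix.mul_add, Matrix.mul_smul, Matrix.mul_one]
  -- w as matrix component
  have hwP : ∀ k : ℤ, w k = ((P k).mulVec ![c,b,a]) 2 := by
    apply aux_uniq14 r s t ht _ _ hw
    · intro k
      rw [Prec k]
      simp [Matrix.add_mulVec, Matrix.smul_mulVec]
    · rw [hP0, hw0]; simp
    · rw [hP1, hw1]
      simp [hM, Matrix.mulVec, dotProduct, Fin.sum_univ_three,
        Matrix.vecHead, Matrix.vecTail]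
    · rw [hw2, show (2:ℤ) = 1 + 1 by norm_num, Pmul, hP1]
      simp [hM, Matrix.mulVec, dotProduct, Matrix.mul_apply, Fin.sum_univ_three,
        Matrix.vecHead, Matrix.vecTail]
  -- v as trace
  have hvP : ∀ k : ℤ, v k = (P k).trace := by
    apply aux_uniq14 r s t ht _ _ hv
    · intro k
      rw [Prec k]
      simp [Matrix.trace_add, Matrix.trace_smul, smul_eq_mul]
    · rw [hP0, hv0]; simp [Matrix.trace_one]
    · rw [hP1, hv1]
      simp [hM, Matrix.trace_fin_three, Matrix.vecHead, Matrix.vecTail]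
    · rw [hv2, show (2:ℤ) = 1 + 1 by norm_num, Pmul, hP1]
      simp [hM, Matrix.trace_fin_three, Matrix.mul_apply, Fin.sum_univ_three,
        Matrix.vecHead, Matrix.vecTail]
      ring
  -- det of P
  have hdetP : ∀ k : ℤ, (P k).det = t ^ k := by
    intro k
    have h1 : ((Units.map (Matrix.detMonoidHom)) (u ^ k)) =
        ((Units.map (Matrix.detMonoidHom)) u) ^ k := map_zpow _ _ _
    have h2 := congrArg (Units.val) h1
    rw [Units.coe_map, Units.val_zpow_eq_zpow_val, Units.coe_map] at h2
    simp only [MonoidHom.coe_coe, Matrix.coe_detMonoidHom] at h2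
    simp only [hP]
    rw [h2, hu, hdetM]
  intro n m
  -- matrix identity: Cayley–Hamilton for P m, multiplied by P (n - 2m)
  have hA3 : P m * P m * P m * P (n - 2*m) = P (n + m) := by
    rw [← Pmul, ← Pmul, ← Pmul]; congr 1; ring
  have hA2 : P m * P m * P (n - 2*m) = P n := by
    rw [← Pmul, ← Pmul]; congr 1; ring
  have hA1 : P m * P (n - 2*m) = P (n - m) := by
    rw [← Pmul]; congr 1; ring
  have hAA : P m * P m = P (2*m) := by rw [← Pmul]; congr 1; ring
  have key := congrArg (fun X => X * P (n - 2*m)) (aux_ch14 (P m))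
  simp only [Matrix.smul_mul, Matrix.sub_mul, Matrix.add_mul, Matrix.one_mul] at key
  rw [hA3, hA2, hA1, hAA] at key
  have key2 := congrArg (fun X => (X.mulVec ![c,b,a]) 2) key
  simp only [Matrix.add_mulVec, Matrix.sub_mulVec, Matrix.smul_mulVec,
    Pi.add_apply, Pi.sub_apply, Pi.smul_apply, smul_eq_mul] at key2
  rw [← hwP, ← hwP, ← hwP, ← hwP, ← hvP, ← hvP, hdetP] at key2
  exact key2
end

section
/- For all integers n, u_{-n} = (u_{2n} - u_n v_n) / t^n. -/
set_option maxHeartbeats 1000000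

open Matrix

lemma ch3 (A : Matrix (Fin 3) (Fin 3) ℂ) :
    A * A * A = A.trace • (A * A)
      - (A 0 0 * A 1 1 - A 0 1 * A 1 0 + A 0 0 * A 2 2 - A 0 2 * A 2 0
          + A 1 1 * A 2 2 - A 1 2 * A 2 1) • A + A.det • (1 : Matrix (Fin 3) (Fin 3) ℂ) := by
  ext i j
  fin_cases i <;> fin_cases j <;>
    simp [Matrix.mul_apply, Fin.sum_univ_three, Matrix.trace_fin_three,
      Matrix.det_fin_three, Matrix.one_apply] <;> ring

theorem stmt_16 (r s t : ℂ) (ht : t ≠ 0)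
    (u v : ℤ → ℂ)
    (hu : ∀ n : ℤ, u n = r * u (n-1) + s * u (n-2) + t * u (n-3))
    (hu0 : u 0 = 0) (hu1 : u 1 = 1) (hu2 : u 2 = r)
    (hv : ∀ n : ℤ, v n = r * v (n-1) + s * v (n-2) + t * v (n-3))
    (hv0 : v 0 = 3) (hv1 : v 1 = r) (hv2 : v 2 = r ^ 2 + 2 * s) :
    ∀ n : ℤ, u (-n) = (u (2 * n) - u n * v n) / t ^ n := by
  set M : Matrix (Fin 3) (Fin 3) ℂ := !![r, s, t; 1, 0, 0; 0, 1, 0] with hM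
  have hdetM : M.det = t := by
    rw [hM]; simp [Matrix.det_fin_three, Matrix.vecHead, Matrix.vecTail]
  have hU : IsUnit M.det := by rw [hdetM]; exact ht.isUnit
  set N : Matrix (Fin 3) (Fin 3) ℂ := !![0, 1, 0; 0, 0, 1; t⁻¹, -(r * t⁻¹), -(s * t⁻¹)] with hN
  have hMN : M * N = 1 := by
    ext i j
    rw [hM, hN, Matrix.mul_apply, Fin.sum_univ_three]
    fin_cases i <;> fin_cases j <;>
      · simp [Matrix.one_apply, Matrix.vecHead, Matrix.vecTail]
        try field_simp
        try ring
  have hinv : M⁻¹ = N := Matrix.inv_eq_right_inv hMN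
  -- entry lemmas for multiplication by M and N
  have mulM : ∀ A : Matrix (Fin 3) (Fin 3) ℂ,
      (M * A) 0 0 = r * A 0 0 + s * A 1 0 + t * A 2 0 ∧
      (M * A) 1 0 = A 0 0 ∧ (M * A) 2 0 = A 1 0 := by
    intro A
    refine ⟨?_, ?_, ?_⟩ <;>
      · rw [hM, Matrix.mul_apply, Fin.sum_univ_three]
        simp [Matrix.vecHead, Matrix.vecTail]
  have mulN : ∀ A : Matrix (Fin 3) (Fin 3) ℂ,
      (N * A) 0 0 = A 1 0 ∧ (N * A) 1 0 = A 2 0 ∧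
      (N * A) 2 0 = t⁻¹ * A 0 0 - r * t⁻¹ * A 1 0 - s * t⁻¹ * A 2 0 := by
    intro A
    refine ⟨?_, ?_, ?_⟩ <;>
      · rw [hN, Matrix.mul_apply, Fin.sum_univ_three]
        simp [Matrix.vecHead, Matrix.vecTail]
        try ring
  -- u(-1) = 0
  have hum1 : u (-1) = 0 := by
    have h := hu 2
    norm_num at h
    rw [hu2, hu1, hu0] at h
    have h2 : t * u (-1) = 0 := by linear_combination -h
    exact (mul_eq_zero.mp h2).resolve_left ht
  -- first column of M^n
  have hcol : ∀ n : ℤ, (M ^ n) 0 0 = u (n + 1) ∧ (M ^ n) 1 0 = u n ∧ (M ^ n) 2 0 = u (n - 1) := by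
    intro n
    induction n using Int.induction_on with
    | zero =>
      refine ⟨?_, ?_, ?_⟩ <;>
        · simp [Matrix.one_apply, hu1, hu0, hum1]
    | succ n ih =>
      obtain ⟨h0, h1, h2⟩ := ih
      have hstep : M ^ ((n : ℤ) + 1) = M * M ^ (n : ℤ) := by
        rw [add_comm, Matrix.zpow_one_add hU]
      have hrec := hu ((n : ℤ) + 2)
      rw [show ((n : ℤ) + 2) - 1 = n + 1 by ring, show ((n : ℤ) + 2) - 2 = n by ring,
        show ((n : ℤ) + 2) - 3 = n - 1 by ring] at hrec
      obtain ⟨m0, m1, m2⟩ := mulM (M ^ (n : ℤ))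
      rw [hstep]
      refine ⟨?_, ?_, ?_⟩
      · rw [m0, h0, h1, h2, show (n : ℤ) + 1 + 1 = n + 2 by ring, hrec]
      · rw [m1, h0]
      · rw [m2, h1, show (n : ℤ) + 1 - 1 = (n : ℤ) by ring]
    | pred n ih =>
      obtain ⟨h0, h1, h2⟩ := ih
      have hstep : M ^ (-(n : ℤ) - 1) = N * M ^ (-(n : ℤ)) := by
        rw [show -(n : ℤ) - 1 = -1 + -(n : ℤ) by ring, Matrix.zpow_add hU,
          Matrix.zpow_neg_one, hinv]
      have hrec := hu (-(n : ℤ) + 1)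
      rw [show (-(n : ℤ) + 1) - 1 = -(n : ℤ) by ring,
        show (-(n : ℤ) + 1) - 2 = -(n : ℤ) - 1 by ring,
        show (-(n : ℤ) + 1) - 3 = -(n : ℤ) - 2 by ring] at hrec
      obtain ⟨m0, m1, m2⟩ := mulN (M ^ (-(n : ℤ)))
      rw [hstep]
      refine ⟨?_, ?_, ?_⟩
      · rw [m0, h1, show -(n : ℤ) - 1 + 1 = -(n : ℤ) by ring]
      · rw [m1, h2]
      · rw [m2, h0, h1, h2, show -(n : ℤ) - 1 - 1 = -(n : ℤ) - 2 by ring]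
        field_simp
        linear_combination hrec
  -- cube relation
  have hM3 : M * (M * M) = r • (M * M) + s • M + t • (1 : Matrix (Fin 3) (Fin 3) ℂ) := by
    rw [hM]
    ext i j
    fin_cases i <;> fin_cases j <;>
      · simp [Matrix.mul_apply, Fin.sum_univ_three, Matrix.one_apply,
          Matrix.vecHead, Matrix.vecTail]
        try ring
  have hrecM : ∀ n : ℤ, M ^ (n + 3) = r • M ^ (n + 2) + s • M ^ (n + 1) + t • M ^ n := by
    intro n
    have e1 : M ^ n * M = M ^ (n + 1) := (Matrix.zpow_add_one hU n).symm
    have e2 : M ^ n * (M * M) = M ^ (n + 2) := by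
      rw [show n + 2 = (n + 1) + 1 by ring, Matrix.zpow_add_one hU, Matrix.zpow_add_one hU,
        mul_assoc]
    have e3 : M ^ (n + 3) = M ^ n * (M * (M * M)) := by
      rw [show n + 3 = ((n + 1) + 1) + 1 by ring, Matrix.zpow_add_one hU,
        Matrix.zpow_add_one hU, Matrix.zpow_add_one hU, mul_assoc, mul_assoc]
    rw [e3, hM3, Matrix.mul_add, Matrix.mul_add, Matrix.mul_smul, Matrix.mul_smul,
      Matrix.mul_smul, Matrix.mul_one, e1, e2]
  have htrrec : ∀ n : ℤ, (M ^ (n + 3)).trace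
      = r * (M ^ (n + 2)).trace + s * (M ^ (n + 1)).trace + t * (M ^ n).trace := by
    intro n
    rw [hrecM n]
    simp [Matrix.trace_add, Matrix.trace_smul, smul_eq_mul]
  -- trace of M^n equals v n
  have htr3 : ∀ n : ℤ, (M ^ n).trace = v n ∧ (M ^ (n + 1)).trace = v (n + 1) ∧
      (M ^ (n + 2)).trace = v (n + 2) := by
    intro n
    induction n using Int.induction_on with
    | zero =>
      have t0 : (M ^ (0 : ℤ)).trace = 3 := by
        rw [zpow_zero]
        simp [Matrix.trace_fin_three, Matrix.one_apply]
        try norm_num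
      have t1 : (M ^ (1 : ℤ)).trace = r := by
        rw [zpow_one, hM]
        simp [Matrix.trace_fin_three, Matrix.vecHead, Matrix.vecTail]
      have t2 : (M ^ (2 : ℤ)).trace = r ^ 2 + 2 * s := by
        rw [show (2 : ℤ) = 1 + 1 by norm_num, Matrix.zpow_add hU, zpow_one, hM]
        simp [Matrix.trace_fin_three, Matrix.mul_apply, Fin.sum_univ_three,
          Matrix.vecHead, Matrix.vecTail]
        ring
      refine ⟨?_, ?_, ?_⟩
      · rw [hv0]; exact t0
      · rw [show (0 : ℤ) + 1 = 1 by norm_num, hv1]; exact t1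
      · rw [show (0 : ℤ) + 2 = 2 by norm_num, hv2]; exact t2
    | succ n ih =>
      obtain ⟨a, b, c⟩ := ih
      have hnew : (M ^ ((n : ℤ) + 3)).trace = v ((n : ℤ) + 3) := by
        have hvr := hv ((n : ℤ) + 3)
        rw [show ((n : ℤ) + 3) - 1 = n + 2 by ring, show ((n : ℤ) + 3) - 2 = n + 1 by ring,
          show ((n : ℤ) + 3) - 3 = n by ring] at hvr
        rw [htrrec n, a, b, c, hvr]
      refine ⟨b, ?_, ?_⟩
      · rw [show ((n : ℤ) + 1) + 1 = n + 2 by ring]; exact c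
      · rw [show ((n : ℤ) + 1) + 2 = n + 3 by ring]; exact hnew
    | pred n ih =>
      obtain ⟨a, b, c⟩ := ih
      have hnew : (M ^ (-(n : ℤ) - 1)).trace = v (-(n : ℤ) - 1) := by
        have hvr := hv (-(n : ℤ) + 2)
        rw [show (-(n : ℤ) + 2) - 1 = -(n : ℤ) + 1 by ring,
          show (-(n : ℤ) + 2) - 2 = -(n : ℤ) by ring,
          show (-(n : ℤ) + 2) - 3 = -(n : ℤ) - 1 by ring] at hvr
        have htt := htrrec (-(n : ℤ) - 1)
        rw [show (-(n : ℤ) - 1) + 3 = -(n : ℤ) + 2 by ring,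
          show (-(n : ℤ) - 1) + 2 = -(n : ℤ) + 1 by ring,
          show (-(n : ℤ) - 1) + 1 = -(n : ℤ) by ring, a, b, c, hvr] at htt
        have := mul_left_cancel₀ ht (by linear_combination -htt :
          t * (M ^ (-(n : ℤ) - 1)).trace = t * v (-(n : ℤ) - 1))
        exact this
      refine ⟨hnew, ?_, ?_⟩
      · rw [show (-(n : ℤ) - 1) + 1 = -(n : ℤ) by ring]; exact a
      · rw [show (-(n : ℤ) - 1) + 2 = -(n : ℤ) + 1 by ring]; exact b
  -- det of M^n
  have hdetn : ∀ n : ℤ, (M ^ n).det = t ^ n := by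
    intro n
    induction n using Int.induction_on with
    | zero => norm_num
    | succ n ih =>
      rw [Matrix.zpow_add_one hU, Matrix.det_mul, ih, hdetM, ← zpow_add_one₀ ht]
    | pred n ih =>
      rw [show -(n : ℤ) - 1 = -(n : ℤ) - 1 from rfl, Matrix.zpow_sub_one hU,
        Matrix.det_mul, ih, Matrix.det_nonsing_inv, Ring.inverse_eq_inv', hdetM,
        ← zpow_sub_one₀ ht]
  -- main argument
  intro n
  set A : Matrix (Fin 3) (Fin 3) ℂ := M ^ n with hA
  have hUA : IsUnit A.det := hU.det_zpow n
  have hiA : A⁻¹ * A = 1 := Matrix.nonsing_inv_mul A hUA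
  have hch := ch3 A
  set c : ℂ := A 0 0 * A 1 1 - A 0 1 * A 1 0 + A 0 0 * A 2 2 - A 0 2 * A 2 0
      + A 1 1 * A 2 2 - A 1 2 * A 2 1 with hc
  have key : A * A = A.trace • A - c • (1 : Matrix (Fin 3) (Fin 3) ℂ) + A.det • A⁻¹ := by
    have h1 : A⁻¹ * (A * A * A) = A * A := by
      rw [← mul_assoc, ← mul_assoc, hiA, one_mul]
    have h2 : A⁻¹ * (A * A * A)
        = A⁻¹ * (A.trace • (A * A) - c • A + A.det • (1 : Matrix (Fin 3) (Fin 3) ℂ)) := by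
      rw [hch]
    have e : A⁻¹ * (A * A) = A := by rw [← mul_assoc, hiA, one_mul]
    rw [h1, Matrix.mul_add, Matrix.mul_sub, Matrix.mul_smul, Matrix.mul_smul,
      Matrix.mul_smul, Matrix.mul_one, hiA, e] at h2
    exact h2
  have hent := congrFun (congrFun key 1) 0
  simp only [Matrix.add_apply, Matrix.sub_apply, Matrix.smul_apply, smul_eq_mul] at hent
  rw [Matrix.one_apply_ne (by decide)] at hent
  have h2n : A * A = M ^ (2 * n) := by rw [hA, ← Matrix.zpow_add hU, two_mul]
  have hAi : A⁻¹ = M ^ (-n) := (Matrix.zpow_neg hU n).symm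
  rw [h2n, hAi, hA] at hent
  rw [(hcol (2 * n)).2.1, (hcol n).2.1, (hcol (-n)).2.1, (htr3 n).1, hdetn n] at hent
  rw [eq_div_iff (zpow_ne_zero n ht)]
  linear_combination -hent
end
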